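/- Let Γ be a finite simple graph with vertex set X. A vertex x ∈ X is K-minimal if and only if [x] = 𝔞(x). Moreover, if x is K-minimal then: (i) x is L-minimal, and (ii) cl({y}) = [y]⊥ for all y ∈ 𝔞(x). -/
import Mathlib


namespace PCG

variable {X : Type*}

/-- The orthogonal complement of a set of vertices: all vertices at distance at
most one from every element of `Y`. -/
def perp (Γ : SimpleGraph X) (Y : Set X) : Set X :=
  {u | ∀ y ∈ Y, u = y ∨ Γ.Adj u y}

/-- The closure operator `cl(Y) = Y^⊥⊥`. -/
def cl (Γ : SimpleGraph X) (Y : Set X) : Set X :=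
  perp Γ (perp Γ Y)

/-- The admissible-set operator `𝔞(Y) = ⋂_{y ∈ Y} (y^⊥ \ {y})^⊥` (with `𝔞(∅) = X`). -/
def aSet (Γ : SimpleGraph X) (Y : Set X) : Set X :=
  ⋂ y ∈ Y, perp Γ (perp Γ {y} \ {y})

/-- A set is admissible if it is `𝔞(Y)` for some `Y`. -/
def IsAdmissible (Γ : SimpleGraph X) (A : Set X) : Prop :=
  ∃ Y : Set X, A = aSet Γ Y

/-- A set is closed if it equals its closure. -/
def IsClosedSet (Γ : SimpleGraph X) (Y : Set X) : Prop :=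
  Y = cl Γ Y

/-- `x` dominates `y` if `x^⊥ ∩ y^⊥ = y^⊥ \ {y}`. -/
def Dominates (Γ : SimpleGraph X) (x y : X) : Prop :=
  perp Γ {x} ∩ perp Γ {y} = perp Γ {y} \ {y}

/-- The set of dominated vertices. -/
def Dom (Γ : SimpleGraph X) : Set X :=
  {y | ∃ x, Dominates Γ x y}

/-- The `∼⊥`-equivalence class of `x`: vertices with the same star as `x`. -/
def perpClass (Γ : SimpleGraph X) (x : X) : Set X :=
  {y | perp Γ {y} = perp Γ {x}}

/-- The `∼◇`-equivalence class of `x`: vertices with the same link as `x`. -/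
def diaClass (Γ : SimpleGraph X) (x : X) : Set X :=
  {y | perp Γ {y} \ {y} = perp Γ {x} \ {x}}

/-- The `∼`-equivalence class `[x]`. -/
def simClass (Γ : SimpleGraph X) (x : X) : Set X :=
  perpClass Γ x ∪ diaClass Γ x

/-- The outer admissible set of `y`. -/
def out (Γ : SimpleGraph X) (y : X) : Set X :=
  {x | Dominates Γ x y ∧ simClass Γ x ≠ simClass Γ y}

/-- `C` is the vertex set of a connected component of the full subgraph of `Γ` on `S`. -/
def IsCompOf (Γ : SimpleGraph X) (S : Set X) (C : Set X) : Prop :=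
  ∃ K : (Γ.induce S).ConnectedComponent, C = Subtype.val '' K.supp

/-- Balanced graphs. -/
def Balanced (Γ : SimpleGraph X) : Prop :=
  ∀ v ∈ Dom Γ, out Γ v = ∅ ∨ ∃ C : Set X, IsCompOf Γ ((perp Γ {v})ᶜ) C ∧ out Γ v ⊆ C

/-- Relators of the partially commutative group: commutators of adjacent vertices. -/
def raagRels (Γ : SimpleGraph X) : Set (FreeGroup X) :=
  {w | ∃ x y : X, Γ.Adj x y ∧
    w = FreeGroup.of x * FreeGroup.of y * (FreeGroup.of x)⁻¹ * (FreeGroup.of y)⁻¹}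

/-- The partially commutative group (right-angled Artin group) of `Γ`. -/
abbrev RAAG (Γ : SimpleGraph X) : Type _ := PresentedGroup (raagRels Γ)

/-- The generator of `RAAG Γ` corresponding to a vertex. -/
def gen (Γ : SimpleGraph X) (x : X) : RAAG Γ := PresentedGroup.of x

/-- The canonical parabolic subgroup generated by a set of vertices. -/
def parab (Γ : SimpleGraph X) (Y : Set X) : Subgroup (RAAG Γ) :=
  Subgroup.closure (gen Γ '' Y)

/-- Conjugate of a subgroup: `H^f = f⁻¹ H f`. -/
def conjBy {G : Type*} [Group G] (H : Subgroup G) (f : G) : Subgroup G :=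
  Subgroup.map (MulAut.conj f⁻¹).toMonoidHom H

/-- Inversions. -/
def InvSet (Γ : SimpleGraph X) : Set (MulAut (RAAG Γ)) :=
  {φ | ∃ x : X, φ (gen Γ x) = (gen Γ x)⁻¹ ∧ ∀ y : X, y ≠ x → φ (gen Γ y) = gen Γ y}

/-- Transvections. -/
def TrSet (Γ : SimpleGraph X) : Set (MulAut (RAAG Γ)) :=
  {φ | ∃ x y : X, y ≠ x ∧
    (φ (gen Γ x) = gen Γ x * gen Γ y ∨ φ (gen Γ x) = (gen Γ y)⁻¹ * gen Γ x) ∧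
    ∀ z : X, z ≠ x → φ (gen Γ z) = gen Γ z}

/-- Elementary conjugating automorphisms. -/
def LInnSet (Γ : SimpleGraph X) : Set (MulAut (RAAG Γ)) :=
  {φ | ∃ (x : X) (C : Set X) (ε : ℤ), (ε = 1 ∨ ε = -1) ∧
    IsCompOf Γ ((perp Γ {x})ᶜ) C ∧
    (∀ u ∈ C, φ (gen Γ u) = (gen Γ x ^ ε)⁻¹ * gen Γ u * gen Γ x ^ ε) ∧
    (∀ u : X, u ∉ C → φ (gen Γ u) = gen Γ u)}

/-- The subgroup `Aut*(G)` generated by inversions, transvections and elementary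
conjugating automorphisms. -/
def AutStar (Γ : SimpleGraph X) : Subgroup (MulAut (RAAG Γ)) :=
  Subgroup.closure (InvSet Γ ∪ TrSet Γ ∪ LInnSet Γ)

/-- Basis-conjugating automorphisms. -/
def IsBasisConj (Γ : SimpleGraph X) (φ : MulAut (RAAG Γ)) : Prop :=
  ∀ x : X, ∃ g : RAAG Γ, φ (gen Γ x) = g⁻¹ * gen Γ x * g

/-- Normal conjugating automorphisms. -/
def IsConjN (Γ : SimpleGraph X) (φ : MulAut (RAAG Γ)) : Prop :=
  IsBasisConj Γ φ ∧
    ∀ x : X, ∃ f : RAAG Γ, ∀ z ∈ aSet Γ {x}, φ (gen Γ z) = f⁻¹ * gen Γ z * f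

/-- Vertex conjugating automorphisms. -/
def IsConjV (Γ : SimpleGraph X) (φ : MulAut (RAAG Γ)) : Prop :=
  IsBasisConj Γ φ ∧
    ∀ x : X, ∃ f : RAAG Γ, ∀ y ∈ simClass Γ x, φ (gen Γ y) = f⁻¹ * gen Γ y * f

/-- Membership in `St(K)`. -/
def IsStK (Γ : SimpleGraph X) (φ : MulAut (RAAG Γ)) : Prop :=
  ∀ A : Set X, IsAdmissible Γ A →
    Subgroup.map φ.toMonoidHom (parab Γ A) = parab Γ A

/-- Membership in `St(L)`. -/
def IsStL (Γ : SimpleGraph X) (φ : MulAut (RAAG Γ)) : Prop :=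
  ∀ A : Set X, IsClosedSet Γ A →
    Subgroup.map φ.toMonoidHom (parab Γ A) = parab Γ A

/-- Membership in `St^conj(K)`. -/
def IsStConjK (Γ : SimpleGraph X) (φ : MulAut (RAAG Γ)) : Prop :=
  ∀ A : Set X, IsAdmissible Γ A →
    ∃ f : RAAG Γ, Subgroup.map φ.toMonoidHom (parab Γ A) = conjBy (parab Γ A) f

/-- Aggregate conjugating automorphisms. -/
def AggrSet (Γ : SimpleGraph X) : Set (MulAut (RAAG Γ)) :=
  {φ | ∃ (x : X) (C : Set X), IsCompOf Γ ({x}ᶜ) C ∧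
    (∀ y ∈ C, φ (gen Γ y) = (gen Γ x)⁻¹ * gen Γ y * gen Γ x) ∧
    (∀ y : X, y ∉ C → φ (gen Γ y) = gen Γ y)}

/-- Elementary singular conjugating automorphisms: those `α_{C,x^ε}` with `C` a singleton. -/
def LInnSSet (Γ : SimpleGraph X) : Set (MulAut (RAAG Γ)) :=
  {φ | ∃ (x y : X) (ε : ℤ), (ε = 1 ∨ ε = -1) ∧
    IsCompOf Γ ((perp Γ {x})ᶜ) {y} ∧
    φ (gen Γ y) = (gen Γ x ^ ε)⁻¹ * gen Γ y * gen Γ x ^ ε ∧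
    ∀ u : X, u ≠ y → φ (gen Γ u) = gen Γ u}

/-- Basic collected conjugating automorphisms. -/
def LInnCSet (Γ : SimpleGraph X) : Set (MulAut (RAAG Γ)) :=
  {φ | ∃ x u : X, Dominates Γ x u ∧
    (∀ v ∈ simClass Γ u \ {x}, φ (gen Γ v) = (gen Γ x)⁻¹ * gen Γ v * gen Γ x) ∧
    (∀ v : X, v ∉ simClass Γ u \ {x} → φ (gen Γ v) = gen Γ v)}

/-- Regular elementary conjugating automorphisms. -/
def LInnRSet (Γ : SimpleGraph X) : Set (MulAut (RAAG Γ)) :=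
  (LInnSet Γ ∩ {φ | IsConjV Γ φ}) \ LInnSSet Γ

/-- Basic vertex conjugating automorphisms. -/
def LInnVSet (Γ : SimpleGraph X) : Set (MulAut (RAAG Γ)) :=
  LInnRSet Γ ∪ LInnCSet Γ

/-- Tame extended elementary conjugating automorphisms. -/
def LInnTSet (Γ : SimpleGraph X) : Set (MulAut (RAAG Γ)) :=
  {φ | ∃ (y : X) (L : Set X) (ε : ℤ), (ε = 1 ∨ ε = -1) ∧
    (∀ v ∈ L, ∃ C : Set X, IsCompOf Γ ((perp Γ {y})ᶜ) C ∧ v ∈ C ∧ C ⊆ L) ∧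
    aSet Γ {y} ∩ L = ∅ ∧
    (∀ u ∈ L, φ (gen Γ u) = (gen Γ y ^ ε)⁻¹ * gen Γ u * gen Γ y ^ ε) ∧
    (∀ u : X, u ∉ L → φ (gen Γ u) = gen Γ u)}

/-- `K`-minimal vertices. -/
def KMin (Γ : SimpleGraph X) (x : X) : Prop :=
  ∀ y : X, aSet Γ {y} ⊆ aSet Γ {x} → aSet Γ {y} = aSet Γ {x}

/-- `L`-minimal vertices. -/
def LMin (Γ : SimpleGraph X) (x : X) : Prop :=
  ∀ y : X, cl Γ {y} ⊆ cl Γ {x} → cl Γ {y} = cl Γ {x}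

end PCG


namespace PCG

variable {X : Type*} {Γ : SimpleGraph X}

lemma mem_perp_singleton {u y : X} : u ∈ perp Γ {y} ↔ u = y ∨ Γ.Adj u y := by
  simp [perp]

lemma perp_singleton_comm {u y : X} : u ∈ perp Γ {y} ↔ y ∈ perp Γ {u} := by
  rw [mem_perp_singleton, mem_perp_singleton, eq_comm, Γ.adj_comm]

lemma self_mem_perp {y : X} : y ∈ perp Γ {y} := mem_perp_singleton.2 (Or.inl rfl)

lemma mem_aSet_singleton {u x : X} :
    u ∈ aSet Γ {x} ↔ ∀ w, w ∈ perp Γ {x} → w ≠ x → w ∈ perp Γ {u} := by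
  constructor
  · intro h w hw hwx
    have := Set.mem_iInter₂.1 h x rfl
    have h2 := this w ⟨hw, hwx⟩
    exact perp_singleton_comm.1 (mem_perp_singleton.2 h2)
  · intro h
    refine Set.mem_iInter₂.2 ?_
    rintro z rfl w ⟨hw, hwx⟩
    have := h w hw hwx
    rw [mem_perp_singleton] at this
    rcases this with h1 | h1
    · exact Or.inl h1.symm
    · exact Or.inr h1.symm

lemma self_mem_aSet {x : X} : x ∈ aSet Γ {x} :=
  mem_aSet_singleton.2 fun w hw _ => hw

lemma aSet_sub_of_mem {x y : X} (h : y ∈ aSet Γ {x}) : aSet Γ {y} ⊆ aSet Γ {x} := by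
  rw [mem_aSet_singleton] at h
  intro u hu
  rw [mem_aSet_singleton] at hu ⊢
  intro w hw hwx
  have hwy : w ∈ perp Γ {y} := h w hw hwx
  by_cases hwy' : w = y
  · -- w = y, need y ∈ perp {u}
    subst hwy'
    -- w ∈ perp {x}, w ≠ x so Adj w x, so x ∈ lk(w), so x ∈ perp {u}
    have hadj : Γ.Adj w x := (mem_perp_singleton.1 hw).resolve_left hwx
    have hxw : x ∈ perp Γ {w} := mem_perp_singleton.2 (Or.inr hadj.symm)
    have hxu : x ∈ perp Γ {u} := hu x hxw (fun hxw' => hwx (by rw [hxw'] at hadj; exact absurd hadj (Γ.irrefl)))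
    -- x ∈ perp {u}: x = u ∨ Adj x u
    rcases mem_perp_singleton.1 hxu with h1 | h1
    · -- u = x; w ∈ perp {x} = perp {u}
      rw [← h1]; exact hw
    · -- Adj x u, u ≠ x, so u ∈ lk(x), so w=y ∈ perp{u}... need via h
      have hupx : u ∈ perp Γ {x} := mem_perp_singleton.2 (Or.inr h1.symm)
      have hux : u ≠ x := fun e => (by rw [e] at h1; exact Γ.irrefl h1)
      have := h u hupx hux
      exact perp_singleton_comm.1 this
  · exact hu w hwy hwy'

lemma sim_of_mutual {x y : X} (hxy : y ∈ aSet Γ {x}) (hyx : x ∈ aSet Γ {y}) :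
    y ∈ simClass Γ x := by
  rw [mem_aSet_singleton] at hxy hyx
  by_cases hxy' : y = x
  · subst hxy'; exact Or.inl rfl
  by_cases hadj : Γ.Adj x y
  · -- star equal
    left
    show perp Γ {y} = perp Γ {x}
    ext w
    constructor
    · intro hw
      by_cases hwy : w = y
      · subst hwy; exact mem_perp_singleton.2 (Or.inr hadj.symm)
      · by_cases hwx : w = x
        · subst hwx; exact self_mem_perp
        · exact hyx w hw hwy
    · intro hw
      by_cases hwx : w = x
      · subst hwx; exact mem_perp_singleton.2 (Or.inr hadj)
      · by_cases hwy : w = y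
        · subst hwy; exact self_mem_perp
        · exact hxy w hw hwx
  · -- link equal
    right
    show perp Γ {y} \ {y} = perp Γ {x} \ {x}
    ext w
    constructor
    · rintro ⟨hw, hwy⟩
      have hwy' : w ≠ y := hwy
      have hwx : w ∈ perp Γ {x} := hyx w hw hwy'
      refine ⟨hwx, ?_⟩
      intro hwx'
      have : (x : X) = w := hwx'.symm ▸ rfl
      -- w = x, w ∈ perp {y}, w ≠ y so Adj w y, so Adj x y
      have hadj2 : Γ.Adj w y := (mem_perp_singleton.1 hw).resolve_left hwy'
      exact hadj (by rwa [show w = x from hwx'] at hadj2)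
    · rintro ⟨hw, hwx⟩
      have hwx' : w ≠ x := hwx
      have hwy : w ∈ perp Γ {y} := hxy w hw hwx'
      refine ⟨hwy, ?_⟩
      intro hwy'
      have hadj2 : Γ.Adj w x := (mem_perp_singleton.1 hw).resolve_left hwx'
      exact hadj ((by rwa [show w = y from hwy'] at hadj2) : Γ.Adj y x).symm

lemma sim_sub_aSet {x : X} : simClass Γ x ⊆ aSet Γ {x} := by
  rintro y (hy | hy) <;> rw [mem_aSet_singleton] <;> intro w hw hwx
  · rw [show perp Γ {x} = perp Γ {y} from (hy : perp Γ {y} = perp Γ {x}).symm] at hw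
    exact hw
  · have : w ∈ perp Γ {y} \ {y} := by
      rw [show perp Γ {y} \ {y} = perp Γ {x} \ {x} from hy]
      exact ⟨hw, hwx⟩
    exact this.1

lemma sim_symm {x y : X} (h : y ∈ simClass Γ x) : x ∈ simClass Γ y := by
  rcases h with h | h
  · exact Or.inl (h : perp Γ {y} = perp Γ {x}).symm
  · exact Or.inr (h : perp Γ {y} \ {y} = perp Γ {x} \ {x}).symm

lemma mem_cl_singleton {u y : X} :
    u ∈ cl Γ {y} ↔ perp Γ {y} ⊆ perp Γ {u} := by
  constructor
  · intro h w hw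
    have := h w hw
    rcases this with h1 | h1
    · exact h1 ▸ self_mem_perp
    · exact mem_perp_singleton.2 (Or.inr h1.symm)
  · intro h w hw
    rcases mem_perp_singleton.1 (h hw) with h1 | h1
    · exact Or.inl h1.symm
    · exact Or.inr h1.symm

end PCG

namespace PCG

/-- `x` is `K`-minimal iff `[x] = 𝔞(x)`; moreover a `K`-minimal
vertex is `L`-minimal and `cl({y}) = [y]⊥` for all `y ∈ 𝔞(x)`. -/
theorem kMin_characterisation {X : Type*} [Fintype X] (Γ : SimpleGraph X) (x : X) :
    (KMin Γ x ↔ simClass Γ x = aSet Γ {x}) ∧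
    (KMin Γ x → LMin Γ x ∧ ∀ y ∈ aSet Γ {x}, cl Γ {y} = perpClass Γ y) := by
  have part1 : KMin Γ x ↔ simClass Γ x = aSet Γ {x} := by
    constructor
    · intro hK
      apply Set.Subset.antisymm sim_sub_aSet
      intro y hy
      have h1 : aSet Γ {y} = aSet Γ {x} := hK y (aSet_sub_of_mem hy)
      have h2 : x ∈ aSet Γ {y} := h1 ▸ self_mem_aSet
      exact sim_of_mutual hy h2
    · intro hEq y hsub
      have hy : y ∈ aSet Γ {x} := hsub self_mem_aSet
      have hsim : y ∈ simClass Γ x := hEq ▸ hy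
      have : x ∈ aSet Γ {y} := sim_sub_aSet (sim_symm hsim)
      exact Set.Subset.antisymm hsub (aSet_sub_of_mem this)
  refine ⟨part1, fun hK => ?_⟩
  have hcl : ∀ y ∈ aSet Γ {x}, cl Γ {y} = perpClass Γ y := by
    intro y hy
    ext u
    rw [mem_cl_singleton]
    constructor
    · intro hsub
      have hu : u ∈ aSet Γ {y} := by
        rw [mem_aSet_singleton]
        intro w hw _
        exact hsub hw
      have hyx : aSet Γ {y} = aSet Γ {x} := hK y (aSet_sub_of_mem hy)
      have hux : u ∈ aSet Γ {x} := hyx ▸ hu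
      have h1 : aSet Γ {u} = aSet Γ {x} := hK u (aSet_sub_of_mem hux)
      have h2 : y ∈ aSet Γ {u} := (h1.trans hyx.symm) ▸ self_mem_aSet
      have hsim : u ∈ simClass Γ y := sim_of_mutual (hyx.symm ▸ hux) h2
      rcases hsim with h | h
      · exact h
      · -- same link; show u = y hence stars equal
        show perp Γ {u} = perp Γ {y}
        by_cases huy : u = y
        · rw [huy]
        · exfalso
          have hyu : y ∈ perp Γ {u} := hsub self_mem_perp
          have : y ∈ perp Γ {u} \ {u} := ⟨hyu, fun e => huy ((e : y = u)).symm⟩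
          rw [(h : perp Γ {u} \ {u} = perp Γ {y} \ {y})] at this
          exact this.2 rfl
    · intro hu
      rw [(hu : perp Γ {u} = perp Γ {y})]
  refine ⟨?_, hcl⟩
  intro z hz
  have hx : cl Γ {x} = perpClass Γ x := hcl x self_mem_aSet
  have hzz : z ∈ cl Γ {z} := mem_cl_singleton.2 (le_refl _)
  have : z ∈ perpClass Γ x := hx ▸ hz hzz
  have heq : perp Γ {z} = perp Γ {x} := this
  show cl Γ {z} = cl Γ {x}
  unfold cl
  rw [heq]

end PCG
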